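/- Let f : ℝ^n → ℝ ∪ {+∞} be proper, lower semicontinuous, coercive, and uniformly quasiconvex with modulus φ on a closed convex set C ⊆ dom f, and let {x^k}_{k≥0} be a HiPPA sequence for f on C with order p > 1 and parameters γ_k ∈ (γ_min, γ_max). Then the sequence {x^k} converges to the unique global minimizer x̄ of f on C, i.e., x^k → x̄ where {x̄} = argmin_{x∈C} f(x). -/

import Mathlib

noncomputable section

open Set Filter

/-- `φ : [0,∞) → [0,∞]` is a modulus: increasing and vanishing only at `0`. -/
def IsModulus (φ : ℝ → EReal) : Prop :=
  (∀ ⦃s t : ℝ⦄, 0 ≤ s → s ≤ t → φ s ≤ φ t) ∧ φ 0 = 0 ∧ (∀ t : ℝ, 0 < t → 0 < φ t)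

/-- `f` is uniformly quasiconvex on `C` with modulus `φ`. -/
def UnifQuasiconvexOn {E : Type*} [NormedAddCommGroup E] [NormedSpace ℝ E]
    (C : Set E) (φ : ℝ → EReal) (f : E → EReal) : Prop :=
  ∀ ⦃x⦄, x ∈ C → ∀ ⦃y⦄, y ∈ C → ∀ ⦃l : ℝ⦄, l ∈ Set.Icc (0 : ℝ) 1 →
    f (l • x + (1 - l) • y) + ((l * (1 - l) : ℝ) : EReal) * φ ‖x - y‖ ≤ max (f x) (f y)

/-- `f(x) → +∞` as `‖x‖ → +∞`. -/
def Coercive {E : Type*} [NormedAddCommGroup E] (f : E → EReal) : Prop :=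
  ∀ M : ℝ, ∃ R : ℝ, ∀ x : E, R ≤ ‖x‖ → (M : EReal) < f x

/-- The high-order proximal set `prox_{f,γ}^p(C, x) = argmin_{y ∈ C} (f(y) + (1/(pγ))‖x − y‖^p)`. -/
def HOProx {E : Type*} [NormedAddCommGroup E]
    (f : E → EReal) (C : Set E) (p γ : ℝ) (x : E) : Set E :=
  {y | y ∈ C ∧ ∀ z ∈ C,
    f y + ((1 / (p * γ) * ‖x - y‖ ^ p : ℝ) : EReal)
      ≤ f z + ((1 / (p * γ) * ‖x - z‖ ^ p : ℝ) : EReal)}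

/-- A lower semicontinuous `EReal`-valued function attains its minimum on a
nonempty compact set. -/
lemma lsc_min_aux {E : Type*} [TopologicalSpace E] [T2Space E] {f : E → EReal}
    (hf : LowerSemicontinuous f) {K : Set E} (hK : IsCompact K) (hne : K.Nonempty) :
    ∃ a ∈ K, ∀ y ∈ K, f a ≤ f y := by
  haveI : Nonempty K := hne.to_subtype
  set S : K → Set E := fun z => {y ∈ K | f y ≤ f z} with hS
  have hclosed : ∀ z : K, IsClosed (S z) := fun z => by
    have : S z = K ∩ f ⁻¹' Iic (f z) := by ext y; simp [hS, and_comm]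
    rw [this]; exact hK.isClosed.inter (hf.isClosed_preimage _)
  have hsub : ∀ z : K, S z ⊆ K := fun z y hy => hy.1
  have hnon : ∀ z : K, (S z).Nonempty := fun z => ⟨z, z.2, le_rfl⟩
  have hdir : Directed (· ⊇ ·) S := by
    intro z w
    rcases le_total (f z) (f w) with h | h
    · exact ⟨z, fun y hy => hy, fun y hy => ⟨hy.1, hy.2.trans h⟩⟩
    · exact ⟨w, fun y hy => ⟨hy.1, hy.2.trans h⟩, fun y hy => hy⟩
  obtain ⟨a, ha⟩ := IsCompact.nonempty_iInter_of_directed_nonempty_isCompact_isClosed S hdir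
    hnon (fun z => hK.of_isClosed_subset (hclosed z) (hsub z)) hclosed
  simp only [Set.mem_iInter] at ha
  exact ⟨a, (ha ⟨hne.some, hne.some_mem⟩).1, fun y hy => (ha ⟨y, hy⟩).2⟩

/-- A one-sided Bernoulli-type estimate for real powers. -/
lemma rpow_add_le_aux {a b p : ℝ} (ha : 0 ≤ a) (hb : 0 ≤ b) (hp : 1 ≤ p) :
    (a + b) ^ p ≤ a ^ p + p * b * (a + b) ^ (p - 1) := by
  set t := a + b with ht
  rcases eq_or_lt_of_le (by positivity : (0:ℝ) ≤ t) with h0 | h0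
  · have hb0 : b = 0 := by linarith [ha, hb]
    have ha0 : a = 0 := by linarith
    simp [← h0, ha0, hb0]
  · have hbt : -1 ≤ -b / t := by
      rw [neg_div, neg_le_neg_iff, div_le_one h0]; linarith
    have key := one_add_mul_self_le_rpow_one_add hbt hp
    have h1 : (1 : ℝ) + -b / t = a / t := by field_simp; ring
    rw [h1, Real.div_rpow ha h0.le] at key
    have htp : (0:ℝ) < t ^ p := Real.rpow_pos_of_pos h0 p
    have key2 : (1 + p * (-b / t)) * t ^ p ≤ a ^ p := (le_div_iff₀ htp).mp key
    have hts : t ^ (p - 1) = t ^ p / t := by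
      rw [Real.rpow_sub h0, Real.rpow_one]
    have : (1 + p * (-b / t)) * t ^ p = t ^ p - p * b * (t ^ p / t) := by
      field_simp; ring
    rw [this, ← hts] at key2
    linarith

/-- **Global convergence of HiPPA.**  A HiPPA sequence converges to the
unique global minimizer `x̄` of `f` on `C`. -/
theorem statement_13 (n : ℕ) (f : EuclideanSpace ℝ (Fin n) → EReal)
    (hproper : ∃ x, f x ≠ ⊤) (hbot : ∀ x, f x ≠ ⊥)
    (hlsc : LowerSemicontinuous f) (hcoer : Coercive f)
    (C : Set (EuclideanSpace ℝ (Fin n)))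
    (hCclosed : IsClosed C) (hCconv : Convex ℝ C)
    (hdom : ∀ x ∈ C, f x ≠ ⊤)
    (φ : ℝ → EReal) (hφ : IsModulus φ)
    (hquasi : UnifQuasiconvexOn C φ f)
    (p γmin γmax : ℝ) (hp : 1 < p) (hγmin : 0 < γmin) (hγ : γmin < γmax)
    (x : ℕ → EuclideanSpace ℝ (Fin n)) (γ : ℕ → ℝ)
    (hx0 : x 0 ∈ C)
    (hγk : ∀ k, γ k ∈ Set.Ioo γmin γmax)
    (hstep : ∀ k, x (k + 1) ∈ HOProx f C p (γ k) (x k)) :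
    ∃ xb ∈ C, (∀ y ∈ C, f xb ≤ f y) ∧
      (∀ z ∈ C, (∀ y ∈ C, f z ≤ f y) → z = xb) ∧
      Filter.Tendsto x Filter.atTop (nhds xb) := by
  have hppos : (0:ℝ) < p := by linarith
  -- iterates remain in C
  have hxC : ∀ k, x k ∈ C := by
    intro k; induction k with
    | zero => exact hx0
    | succ k _ => exact (hstep k).1
  -- real values of f along the iterates
  set F : ℕ → ℝ := fun k => (f (x k)).toReal with hFdef
  have hF : ∀ k, ((F k : ℝ) : EReal) = f (x k) := fun k =>
    EReal.coe_toReal (hdom _ (hxC k)) (hbot _)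
  -- existence of a global minimizer on C
  obtain ⟨R, hR⟩ := hcoer (F 0)
  set R' := max R ‖x 0‖ with hR'
  have hKcomp : IsCompact (C ∩ Metric.closedBall 0 R') :=
    (isCompact_closedBall (0 : EuclideanSpace ℝ (Fin n)) R').inter_left hCclosed
  have hx0K : x 0 ∈ C ∩ Metric.closedBall 0 R' :=
    ⟨hx0, by rw [mem_closedBall_zero_iff]; exact le_max_right R ‖x 0‖⟩
  have hKne : (C ∩ Metric.closedBall 0 R').Nonempty := ⟨x 0, hx0K⟩
  obtain ⟨xb, hxbK, hxbminK⟩ := lsc_min_aux hlsc hKcomp hKne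
  have hxbC : xb ∈ C := hxbK.1
  have hxbmin : ∀ y ∈ C, f xb ≤ f y := by
    intro y hy
    by_cases h : ‖y‖ ≤ R'
    · exact hxbminK y ⟨hy, by simpa [mem_closedBall_zero_iff] using h⟩
    · push_neg at h
      have h1 : R ≤ ‖y‖ := (le_max_left R ‖x 0‖).trans h.le
      have h2 : ((F 0 : ℝ) : EReal) < f y := hR y h1
      have h3 : f xb ≤ f (x 0) := hxbminK (x 0) hx0K
      rw [hF 0] at h2
      exact h3.trans h2.le
  -- value of f at the minimizer
  set m : ℝ := (f xb).toReal with hmdef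
  have hm : ((m : ℝ) : EReal) = f xb := EReal.coe_toReal (hdom _ hxbC) (hbot _)
  -- uniqueness of the minimizer
  have huniq : ∀ z ∈ C, (∀ y ∈ C, f z ≤ f y) → z = xb := by
    intro z hz hzmin
    by_contra hne
    have hd : 0 < ‖z - xb‖ := by
      rw [norm_pos_iff, sub_ne_zero]; exact hne
    have hmid : (1/2:ℝ) • z + (1 - 1/2:ℝ) • xb ∈ C :=
      hCconv hz hxbC (by norm_num) (by norm_num) (by norm_num)
    have hq := hquasi hz hxbC (show (1/2:ℝ) ∈ Set.Icc (0:ℝ) 1 by norm_num)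
    have hfeq : f z = f xb := le_antisymm (hzmin xb hxbC) (hxbmin z hz)
    rw [hfeq, max_self] at hq
    have hle : f xb ≤ f ((1/2:ℝ) • z + (1 - 1/2:ℝ) • xb) := hxbmin _ hmid
    have hchain : f xb + ((1/2 * (1 - 1/2) : ℝ) : EReal) * φ ‖z - xb‖ ≤ f xb + 0 := by
      rw [add_zero]
      exact (add_le_add_left hle _).trans hq
    rw [← hm] at hchain
    have hcan := (EReal.addLECancellable_coe m) hchain
    have hpos : (0:EReal) < ((1/2 * (1 - 1/2) : ℝ) : EReal) * φ ‖z - xb‖ :=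
      EReal.mul_pos (by norm_num [EReal.coe_pos]) (hφ.2.2 _ hd)
    exact absurd hcan hpos.not_ge
  refine ⟨xb, hxbC, hxbmin, huniq, ?_⟩
  -- notation for step sizes and displacements
  set s : ℕ → ℝ := fun k => ‖x k - x (k + 1)‖ with hsdef
  have hγpos : ∀ k, 0 < γ k := fun k => hγmin.trans (hγk k).1
  have hcpos : ∀ k, 0 < 1 / (p * γ k) := fun k => by have := hγpos k; positivity
  -- the fundamental descent inequality
  have hA : ∀ k, F (k + 1) + 1 / (p * γ k) * s k ^ p ≤ F k := by
    intro k
    have prox := (hstep k).2 (x k) (hxC k)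
    rw [show x k - x k = 0 by abel, norm_zero, Real.zero_rpow hppos.ne', mul_zero,
      ← hF (k+1), ← hF k] at prox
    rw [EReal.coe_zero, add_zero, ← EReal.coe_add, EReal.coe_le_coe_iff] at prox
    exact prox
  have hFanti : Antitone F := by
    apply antitone_nat_of_succ_le
    intro k
    have h1 : 0 ≤ 1 / (p * γ k) * s k ^ p :=
      mul_nonneg (hcpos k).le (Real.rpow_nonneg (norm_nonneg _) p)
    linarith [hA k]
  have hFlow : ∀ k, m ≤ F k := by
    intro k
    have := hxbmin (x k) (hxC k)
    rw [← hm, ← hF k, EReal.coe_le_coe_iff] at this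
    exact this
  -- F converges
  obtain ⟨L, hL⟩ : ∃ L, Tendsto F atTop (nhds L) :=
    ⟨_, tendsto_atTop_ciInf hFanti ⟨m, by rintro y ⟨k, rfl⟩; exact hFlow k⟩⟩
  have hdiff : Tendsto (fun k => F k - F (k + 1)) atTop (nhds 0) := by
    have h2 : Tendsto (fun k => F (k + 1)) atTop (nhds L) :=
      hL.comp (tendsto_add_atTop_nat 1)
    simpa using hL.sub h2
  -- s tends to 0
  have hsp : Tendsto (fun k => s k ^ p) atTop (nhds 0) := by
    apply squeeze_zero (fun k => Real.rpow_nonneg (norm_nonneg _) p)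
      (g := fun k => (p * γmax) * (F k - F (k + 1)))
    · intro k
      have h1 : 1 / (p * γ k) * s k ^ p ≤ F k - F (k + 1) := by linarith [hA k]
      have h2 : s k ^ p ≤ (p * γ k) * (F k - F (k + 1)) := by
        have := hγpos k
        rw [one_div_mul_eq_div, div_le_iff₀ (by positivity)] at h1
        linarith [h1]
      refine h2.trans ?_
      have h3 : p * γ k ≤ p * γmax := by
        have := (hγk k).2; nlinarith
      have h4 : 0 ≤ F k - F (k + 1) := by linarith [hFanti (Nat.le_succ k)]
      nlinarith
    · simpa using hdiff.const_mul (p * γmax)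
  have hstend : Tendsto s atTop (nhds 0) := by
    have hcont : ContinuousAt (fun t : ℝ => t ^ (1/p)) 0 :=
      Real.continuousAt_rpow_const 0 (1/p) (Or.inr (by positivity))
    have := hcont.tendsto.comp hsp
    rw [Real.zero_rpow (by positivity : (1:ℝ)/p ≠ 0)] at this
    refine this.congr fun k => ?_
    simp only [Function.comp_apply]
    rw [← Real.rpow_mul (norm_nonneg _), mul_one_div, div_self hppos.ne', Real.rpow_one]
  -- uniform bound on distances to xb
  have hxknorm : ∀ k, ‖x k‖ < R := by
    intro k
    by_contra h
    push_neg at h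
    have h1 := hR (x k) h
    rw [← hF k, EReal.coe_lt_coe_iff] at h1
    exact absurd (hFanti (Nat.zero_le k)) (not_le.mpr h1)
  set D : ℝ := |R| + ‖xb‖ + 1 with hDdef
  have hDpos : 0 < D := by positivity
  have hdbound : ∀ k, ‖x k - xb‖ ≤ D := by
    intro k
    calc ‖x k - xb‖ ≤ ‖x k‖ + ‖xb‖ := norm_sub_le _ _
    _ ≤ D := by have := hxknorm k; have := le_abs_self R; simp only [hDdef]; linarith
  -- the key estimate from uniform quasiconvexity
  set B : ℕ → ℝ := fun k => (2 * D / γmin) * ((1 + D) * (s k + 1/((k:ℝ)+1))) ^ (p - 1)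
    with hBdef
  have hkey : ∀ k, φ ‖x (k+1) - xb‖ ≤ ((B k : ℝ) : EReal) := by
    intro k
    simp only [hBdef, hsdef]
    -- set up the comparison point
    have hepos : 0 < ‖x k - x (k+1)‖ + 1/((k:ℝ)+1) :=
      add_pos_of_nonneg_of_pos (norm_nonneg _) (by positivity)
    set e := ‖x k - x (k+1)‖ + 1/((k:ℝ)+1) with hedef
    set l := min (1/2 : ℝ) e with hldef
    have hl0 : 0 < l := lt_min (by norm_num) hepos
    have hlhalf : l ≤ 1/2 := min_le_left _ _
    have hlee : l ≤ e := min_le_right _ _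
    have hl1 : l ≤ 1 := by linarith
    have hzC : l • xb + (1 - l) • x (k+1) ∈ C :=
      hCconv hxbC (hxC (k+1)) hl0.le (by linarith) (by ring)
    have hq := hquasi hxbC (hxC (k+1)) (Set.mem_Icc.mpr ⟨hl0.le, hl1⟩)
    rw [norm_sub_rev xb, max_eq_right (hxbmin _ (hxC (k+1)))] at hq
    have hprox := (hstep k).2 _ hzC
    set z := l • xb + (1 - l) • x (k+1) with hzdef
    set d := ‖x (k+1) - xb‖ with hddef
    set sk := ‖x k - x (k+1)‖ with hskdef
    set q := ‖x k - z‖ with hqdef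
    set c := 1 / (p * γ k) with hcdef
    have hd0 : 0 ≤ d := norm_nonneg _
    have hsk0 : 0 ≤ sk := norm_nonneg _
    have hdD : d ≤ D := hdbound (k+1)
    -- cancel f(x (k+1)) in the EReal inequality
    have big : ((F (k+1) : ℝ) : EReal) + (((c * sk ^ p : ℝ) : EReal)
          + ((l * (1 - l) : ℝ) : EReal) * φ d)
        ≤ ((F (k+1) : ℝ) : EReal) + ((c * q ^ p : ℝ) : EReal) := by
      calc ((F (k+1) : ℝ) : EReal) + (((c * sk ^ p : ℝ) : EReal)
              + ((l * (1 - l) : ℝ) : EReal) * φ d)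
          = (f (x (k+1)) + ((c * sk ^ p : ℝ) : EReal))
              + ((l * (1 - l) : ℝ) : EReal) * φ d := by rw [hF (k+1), ← add_assoc]
        _ ≤ (f z + ((c * q ^ p : ℝ) : EReal))
              + ((l * (1 - l) : ℝ) : EReal) * φ d := add_le_add_left hprox _
        _ = (f z + ((l * (1 - l) : ℝ) : EReal) * φ d)
              + ((c * q ^ p : ℝ) : EReal) := by
            rw [add_assoc, add_comm (((c * q ^ p : ℝ) : EReal)) _, ← add_assoc]
        _ ≤ f (x (k+1)) + ((c * q ^ p : ℝ) : EReal) := add_le_add_left hq _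
        _ = ((F (k+1) : ℝ) : EReal) + ((c * q ^ p : ℝ) : EReal) := by rw [hF (k+1)]
    have hcan := (EReal.addLECancellable_coe (F (k+1))) big
    -- φ d is a (nonnegative) real number
    have hφd0 : (0:EReal) ≤ φ d := by rw [← hφ.2.1]; exact hφ.1 le_rfl hd0
    have hφdbot : φ d ≠ ⊥ := fun hb => by simp [hb] at hφd0
    have hφdtop : φ d ≠ ⊤ := by
      intro htop
      rw [htop, EReal.coe_mul_top_of_pos (by nlinarith : (0:ℝ) < l * (1 - l))] at hcan
      rw [EReal.coe_add_top] at hcan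
      exact absurd (lt_of_le_of_lt hcan (EReal.coe_lt_top _)) (lt_irrefl _)
    have hr : (((φ d).toReal : ℝ) : EReal) = φ d := EReal.coe_toReal hφdtop hφdbot
    set r := (φ d).toReal with hrdef
    have hr0 : 0 ≤ r := by
      rw [← hr] at hφd0; exact EReal.coe_le_coe_iff.mp (by simpa using hφd0)
    rw [← hr, ← EReal.coe_mul, ← EReal.coe_add, EReal.coe_le_coe_iff] at hcan
    -- geometric estimate on q
    have hxz : x k - z = (x k - x (k+1)) - l • (xb - x (k+1)) := by
      rw [hzdef]; module
    have hqle : q ≤ sk + l * d := by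
      rw [hqdef, hxz]
      refine (norm_sub_le _ _).trans ?_
      have hsmul : ‖l • (xb - x (k+1))‖ = l * d := by
        rw [norm_smul, Real.norm_eq_abs, abs_of_pos hl0, norm_sub_rev xb]
      rw [hsmul, hskdef]
    -- real computation
    have hq0 : 0 ≤ q := norm_nonneg _
    have hqp : q ^ p ≤ (sk + l * d) ^ p :=
      Real.rpow_le_rpow hq0 hqle (by linarith)
    have hld0 : 0 ≤ l * d := mul_nonneg hl0.le hd0
    have hbern : (sk + l * d) ^ p ≤ sk ^ p + p * (l * d) * (sk + l * d) ^ (p - 1) :=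
      rpow_add_le_aux hsk0 hld0 hp.le
    have hcp : 0 < c := hcpos k
    have hT0 : 0 ≤ (sk + l * d) ^ (p - 1) :=
      Real.rpow_nonneg (add_nonneg hsk0 hld0) _
    have h8 : c * q ^ p ≤ c * sk ^ p + l * (c * p * d * (sk + l * d) ^ (p - 1)) := by
      calc c * q ^ p ≤ c * (sk ^ p + p * (l * d) * (sk + l * d) ^ (p - 1)) :=
            mul_le_mul_of_nonneg_left (hqp.trans hbern) hcp.le
        _ = c * sk ^ p + l * (c * p * d * (sk + l * d) ^ (p - 1)) := by ring
    have h9 : l * ((1 - l) * r) ≤ l * (c * p * d * (sk + l * d) ^ (p - 1)) := by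
      linarith [hcan, h8]
    have h10 : (1 - l) * r ≤ c * p * d * (sk + l * d) ^ (p - 1) :=
      (mul_le_mul_iff_right₀ hl0).mp h9
    have hγkpos : 0 < γ k := hγpos k
    have hcpval : c * p = 1 / γ k := by
      rw [hcdef]; field_simp
    -- bound the right-hand side
    have hTle : (sk + l * d) ^ (p - 1) ≤ ((1 + D) * e) ^ (p - 1) := by
      apply Real.rpow_le_rpow (add_nonneg hsk0 hld0) ?_ (by linarith)
      have h1 : l * d ≤ e * D := mul_le_mul hlee hdD hd0 hepos.le
      have h2 : sk ≤ e := by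
        rw [hedef]
        have h3 : (0:ℝ) ≤ 1/((k:ℝ)+1) := by positivity
        linarith
      linarith
    have hdiv : 1 / γ k ≤ 1 / γmin := one_div_le_one_div_of_le hγmin (hγk k).1.le
    have hT'0 : 0 ≤ ((1 + D) * e) ^ (p - 1) :=
      Real.rpow_nonneg (mul_nonneg (by linarith) hepos.le) _
    have hfinal : r ≤ 2 * D / γmin * ((1 + D) * e) ^ (p - 1) := by
      have hhalf : (1/2) * r ≤ (1 - l) * r :=
        mul_le_mul_of_nonneg_right (by linarith) hr0
      have h11 : r ≤ 2 * (c * p * d * (sk + l * d) ^ (p - 1)) := by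
        linarith [h10, hhalf]
      rw [hcpval] at h11
      have h12 : 2 * (1 / γ k * d * (sk + l * d) ^ (p - 1))
          ≤ 2 * D / γmin * ((1 + D) * e) ^ (p - 1) := by
        have hgm : 0 < 1 / γmin := by positivity
        have hgk : 0 ≤ 1 / γ k := (one_div_pos.mpr hγkpos).le
        have hA1 : 1 / γ k * d ≤ 1 / γmin * D := mul_le_mul hdiv hdD hd0 hgm.le
        have hA2 : 1 / γ k * d * (sk + l * d) ^ (p - 1)
            ≤ 1 / γmin * D * ((1 + D) * e) ^ (p - 1) :=
          mul_le_mul hA1 hTle hT0 (mul_nonneg hgm.le hDpos.le)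
        calc 2 * (1 / γ k * d * (sk + l * d) ^ (p - 1))
            ≤ 2 * (1 / γmin * D * ((1 + D) * e) ^ (p - 1)) := by linarith
          _ = 2 * D / γmin * ((1 + D) * e) ^ (p - 1) := by ring
      linarith
    rw [← hr]
    exact EReal.coe_le_coe_iff.mpr hfinal
  -- B tends to 0
  have hBtend : Tendsto B atTop (nhds 0) := by
    have he : Tendsto (fun k => s k + 1/((k:ℝ)+1)) atTop (nhds 0) := by
      simpa using hstend.add tendsto_one_div_add_atTop_nhds_zero_nat
    have he2 : Tendsto (fun k => (1 + D) * (s k + 1/((k:ℝ)+1))) atTop (nhds 0) := by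
      simpa using he.const_mul (1 + D)
    have hcont : ContinuousAt (fun t : ℝ => t ^ (p - 1)) 0 :=
      Real.continuousAt_rpow_const 0 (p - 1) (Or.inr (by linarith))
    have h3 := hcont.tendsto.comp he2
    rw [Real.zero_rpow (sub_ne_zero_of_ne hp.ne')] at h3
    simpa [hBdef, Function.comp] using h3.const_mul (2 * D / γmin)
  -- conclude convergence
  rw [Metric.tendsto_atTop]
  intro ε hε
  obtain ⟨r0, hr0pos, hr0le⟩ : ∃ r0 : ℝ, 0 < r0 ∧ ((r0 : ℝ) : EReal) ≤ φ ε := by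
    rcases eq_or_ne (φ ε) ⊤ with h | h
    · exact ⟨1, one_pos, by rw [h]; exact le_top⟩
    · have hb' : φ ε ≠ ⊥ := by
        intro hb; have := hφ.2.2 ε hε; rw [hb] at this; exact absurd this (by simp)
      have hv : (((φ ε).toReal : ℝ) : EReal) = φ ε := EReal.coe_toReal h hb'
      refine ⟨(φ ε).toReal, ?_, hv.le⟩
      have := hφ.2.2 ε hε
      rw [← hv] at this
      exact EReal.coe_pos.mp this
  obtain ⟨N, hN⟩ := (Metric.tendsto_atTop.mp hBtend) r0 hr0pos
  refine ⟨N + 1, fun nn hnn => ?_⟩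
  obtain ⟨k, rfl⟩ : ∃ k, nn = k + 1 := ⟨nn - 1, (Nat.succ_pred_eq_of_pos (by omega)).symm⟩
  have hkN : N ≤ k := by omega
  have hBk : B k < r0 := by
    have := hN k hkN
    rw [Real.dist_eq, sub_zero] at this
    exact (le_abs_self _).trans_lt this
  rw [dist_eq_norm]
  by_contra h
  push_neg at h
  have h1 : φ ε ≤ φ ‖x (k+1) - xb‖ := hφ.1 hε.le h
  have h2 : φ ‖x (k+1) - xb‖ < φ ε :=
    lt_of_le_of_lt (hkey k) (lt_of_lt_of_le (EReal.coe_lt_coe_iff.mpr hBk) hr0le)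
  exact absurd h1 h2.not_ge
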